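/- Let X be a Polish space and F the Hutchinson operator of an IFS (X; f_i : i ∈ I). Fix a positive integer k and let G = F^k be the Hutchinson operator of the k-th iterate IFS (X; f_{i₁}∘…∘f_{i_k} : (i₁,…,i_k) ∈ I^k). If a nonempty closed set A* satisfies ⋂_{x∈X} Li Gⁿ({x}) = A* (i.e., A* is a semiattractor of the iterated system), then ⋂_{x∈X} Li Fⁿ({x}) = A* (i.e., A* is a semiattractor of the original system). -/

import Mathlib

open Filter Topology Set

/-- Lower Kuratowski limit of a sequence of sets. -/
def Li {X : Type*} [MetricSpace X] (S : ℕ → Set X) : Set X :=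
  {y | ∃ u : ℕ → X, (∀ n, u n ∈ S n) ∧ Tendsto u atTop (𝓝 y)}

/-- Hutchinson operator of the IFS `(X; f_i : i ∈ I)`. -/
def hutch {X : Type*} [TopologicalSpace X] {I : Type*} (f : I → X → X) (S : Set X) : Set X :=
  closure (⋃ i, f i '' S)

/-- Composition `f_{i₁} ∘ … ∘ f_{i_k}` along a list of indices. -/
def seqComp {X I : Type*} (f : I → X → X) : List I → (X → X)
  | [] => id
  | i :: t => f i ∘ seqComp f t

section Aux
variable {X : Type*} [TopologicalSpace X] {I : Type*} (f : I → X → X)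

lemma seqComp_ofFn_zero (v : Fin 0 → I) : seqComp f (List.ofFn v) = id := rfl

lemma seqComp_ofFn_succ {k : ℕ} (v : Fin (k + 1) → I) :
    seqComp f (List.ofFn v) = f (v 0) ∘ seqComp f (List.ofFn (Fin.tail v)) := by
  rw [List.ofFn_succ]; rfl

lemma hutch_mono : Monotone (hutch f) := fun _ _ h =>
  closure_mono (iUnion_mono fun _ => image_mono h)

lemma hutch_closure (hf : ∀ i, Continuous (f i)) (S : Set X) :
    hutch f (closure S) = hutch f S := by
  refine subset_antisymm ?_ (hutch_mono f subset_closure)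
  have h : (⋃ i, f i '' closure S) ⊆ closure (⋃ i, f i '' S) := by
    refine iUnion_subset fun i => ?_
    exact (image_closure_subset_closure_image (hf i)).trans
      (closure_mono (subset_iUnion (fun i => f i '' S) i))
  simpa [hutch] using (closure_minimal h isClosed_closure)

lemma hutch_iterate (hf : ∀ i, Continuous (f i)) (k : ℕ) (S : Set X) :
    (hutch f)^[k + 1] S = closure (⋃ v : Fin (k + 1) → I, seqComp f (List.ofFn v) '' S) := by
  induction k with
  | zero =>
      rw [Function.iterate_one, hutch]
      refine congrArg closure ?_
      ext z
      simp only [mem_iUnion, seqComp_ofFn_succ, seqComp_ofFn_zero, Function.comp_id]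
      exact ⟨fun ⟨i, h⟩ => ⟨fun _ => i, h⟩, fun ⟨v, h⟩ => ⟨v 0, h⟩⟩
  | succ k ih =>
      rw [Function.iterate_succ_apply', ih, hutch_closure f hf, hutch]
      refine congrArg closure ?_
      simp only [image_iUnion, ← Set.image_comp]
      ext z
      simp only [mem_iUnion, mem_image, Function.comp]
      constructor
      · rintro ⟨i, v, s, hs, rfl⟩
        refine ⟨Fin.cons i v, s, hs, ?_⟩
        simp [seqComp_ofFn_succ, seqComp, Fin.tail, Function.comp]
      · rintro ⟨w, s, hs, rfl⟩
        exact ⟨w 0, Fin.tail w, s, hs, by simp [seqComp_ofFn_succ, seqComp, Fin.tail, Function.comp]⟩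

lemma hutch_eq_iterate (hf : ∀ i, Continuous (f i)) {k : ℕ} (hk : 0 < k) :
    hutch (fun v : Fin k → I => seqComp f (List.ofFn v)) = (hutch f)^[k] := by
  obtain ⟨m, rfl⟩ := Nat.exists_eq_add_of_lt hk
  funext S
  rw [hutch_iterate f hf, hutch]

lemma hutch_nonempty [Nonempty I] {S : Set X} (h : S.Nonempty) : (hutch f S).Nonempty := by
  obtain ⟨x, hx⟩ := h
  have i := Classical.arbitrary I
  exact Set.Nonempty.closure ⟨f i x, mem_iUnion.2 ⟨i, mem_image_of_mem _ hx⟩⟩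

lemma hutch_iterate_nonempty [Nonempty I] {S : Set X} (h : S.Nonempty) (n : ℕ) :
    ((hutch f)^[n] S).Nonempty := by
  induction n with
  | zero => exact h
  | succ n ih => rw [Function.iterate_succ_apply']; exact hutch_nonempty f ih

end Aux

/-- If `A*` is a semiattractor of the `k`-th iterate IFS, then it is a semiattractor of the
original IFS. -/
theorem semiattractor_of_iterate
    {X : Type*} [MetricSpace X] [CompleteSpace X] [TopologicalSpace.SeparableSpace X]
    {I : Type*} [Fintype I] [Nonempty I]
    (f : I → X → X) (hf : ∀ i, Continuous (f i))
    (k : ℕ) (hk : 0 < k)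
    (A : Set X) (hne : A.Nonempty) (hcl : IsClosed A)
    (hG : ⋂ x : X,
        Li (fun n => (hutch (fun v : Fin k → I => seqComp f (List.ofFn v)))^[n] {x}) = A) :
    ⋂ x : X, Li (fun n => (hutch f)^[n] {x}) = A := by
  have hGF : hutch (fun v : Fin k → I => seqComp f (List.ofFn v)) = (hutch f)^[k] :=
    hutch_eq_iterate f hf hk
  have hGn : ∀ (n : ℕ) (S : Set X),
      (hutch (fun v : Fin k → I => seqComp f (List.ofFn v)))^[n] S = (hutch f)^[k * n] S := by
    intro n S
    rw [hGF, ← Function.iterate_mul]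
  ext y
  simp only [mem_iInter]
  constructor
  · intro h
    rw [← hG] at *
    simp only [mem_iInter] at *
    intro x
    obtain ⟨u, hu, hconv⟩ := h x
    refine ⟨fun n => u (k * n), fun n => ?_, ?_⟩
    · show u (k * n) ∈ (hutch (fun v : Fin k → I => seqComp f (List.ofFn v)))^[n] {x}
      rw [hGn]; exact hu (k * n)
    · exact hconv.comp (StrictMono.tendsto_atTop (strictMono_mul_left_of_pos hk))
  · intro hy x
    have hnex : ∀ r : ℕ, ((hutch f)^[r] {x}).Nonempty :=
      fun r => hutch_iterate_nonempty f (singleton_nonempty x) r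
    choose xr hxr using hnex
    have hmem : ∀ r : ℕ, y ∈ Li (fun n =>
        (hutch (fun v : Fin k → I => seqComp f (List.ofFn v)))^[n] {xr r}) := by
      intro r
      have : y ∈ (⋂ x : X,
          Li (fun n => (hutch (fun v : Fin k → I => seqComp f (List.ofFn v)))^[n] {x})) := by
        rw [hG]; exact hy
      exact mem_iInter.1 this (xr r)
    choose u hu hconv using hmem
    refine ⟨fun n => u (n % k) (n / k), fun n => ?_, ?_⟩
    · have h1 : u (n % k) (n / k) ∈ (hutch f)^[k * (n / k)] {xr (n % k)} := by
        rw [← hGn]; exact hu _ _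
      have h2 : ({xr (n % k)} : Set X) ⊆ (hutch f)^[n % k] {x} :=
        singleton_subset_iff.2 (hxr _)
      have h4 : (hutch f)^[k * (n / k)] {xr (n % k)} ⊆
          (hutch f)^[k * (n / k)] ((hutch f)^[n % k] {x}) :=
        (hutch_mono f).iterate (k * (n / k)) h2
      have h5 : (hutch f)^[k * (n / k)] ((hutch f)^[n % k] {x})
          = (hutch f)^[k * (n / k) + n % k] {x} :=
        (Function.iterate_add_apply _ _ _ _).symm
      have h6 : k * (n / k) + n % k = n := Nat.div_add_mod n k
      rw [h5, h6] at h4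
      exact h4 h1
    · rw [Metric.tendsto_atTop]
      intro ε hε
      have h := fun r => Metric.tendsto_atTop.1 (hconv r) ε hε
      choose N hN using h
      refine ⟨k * ((Finset.range k).sup N + 1), fun n hn => ?_⟩
      refine hN (n % k) (n / k) ?_
      have h1 : N (n % k) ≤ (Finset.range k).sup N :=
        Finset.le_sup (Finset.mem_range.2 (Nat.mod_lt n hk))
      have h2 : (Finset.range k).sup N + 1 ≤ n / k := by
        rw [Nat.le_div_iff_mul_le hk]
        calc ((Finset.range k).sup N + 1) * k = k * ((Finset.range k).sup N + 1) := Nat.mul_comm _ _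
        _ ≤ n := hn
      omega
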